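/- Assume α > δ·E_p. The point (S*, P*) with S* = √δ/√(β_v·v_c·(α − δ·E_p)) and P* = α·μ_v·(K·v_c·√(β_v·v_c·(α − δ·E_p)) − √δ)/(K·β_v·v_c·(α − δ·E_p)·√δ) is an equilibrium of the Type III model: both v_c·μ_v·S*·(1 − S*/(v_c·K)) − β_v·v_c·S*²·P*/(1 + β_v·v_c·E_p·S*²) = 0 and α·β_v·v_c·S*²·P*/(1 + β_v·v_c·E_p·S*²) − δ·P* = 0. -/

import Mathlib

/-- The endemic point of the Type III model is an equilibrium. -/
theorem typeIII_endemic_equilibrium (μv βv Ep K vc α δ : ℝ)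
    (hμ : 0 < μv) (hβ : 0 < βv) (hE : 0 < Ep) (hK : 0 < K) (hv : 0 < vc)
    (hα : 0 < α) (hδ : 0 < δ) (hαδ : δ * Ep < α)
    (Sstar Pstar : ℝ)
    (hSstar : Sstar = Real.sqrt δ / Real.sqrt (βv * vc * (α - δ * Ep)))
    (hPstar : Pstar = α * μv * (K * vc * Real.sqrt (βv * vc * (α - δ * Ep)) - Real.sqrt δ) /
      (K * βv * vc * (α - δ * Ep) * Real.sqrt δ)) :
    vc * μv * Sstar * (1 - Sstar / (vc * K)) -
      βv * vc * Sstar ^ 2 * Pstar / (1 + βv * vc * Ep * Sstar ^ 2) = 0 ∧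
    α * βv * vc * Sstar ^ 2 * Pstar / (1 + βv * vc * Ep * Sstar ^ 2) - δ * Pstar = 0 := by
  have hB : 0 < βv * vc * (α - δ * Ep) := by
    have : 0 < α - δ * Ep := by linarith
    positivity
  set s := Real.sqrt δ with hsdef
  set b := Real.sqrt (βv * vc * (α - δ * Ep)) with hbdef
  have hs0 : 0 < s := Real.sqrt_pos.mpr hδ
  have hb0 : 0 < b := Real.sqrt_pos.mpr hB
  have hs : s ^ 2 = δ := Real.sq_sqrt hδ.le
  have hb : b ^ 2 = βv * vc * (α - δ * Ep) := Real.sq_sqrt hB.le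
  have hS2 : Sstar ^ 2 = δ / (βv * vc * (α - δ * Ep)) := by
    rw [hSstar, div_pow, hs, hb]
  have hαδ' : α - δ * Ep ≠ 0 := by nlinarith
  have hden : 1 + βv * vc * Ep * Sstar ^ 2 = α / (α - δ * Ep) := by
    rw [hS2, mul_div_assoc', add_div' _ _ _ hB.ne', div_eq_div_iff hB.ne' hαδ']; ring
  constructor
  · rw [hden, hSstar, hPstar]
    field_simp
    nlinarith [sq_nonneg s, sq_nonneg b, hs, hb, mul_pos hs0 hb0]
  · rw [hden, hS2]
    field_simp
    ring
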